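/- Conditional positive definiteness of the modified kinetic-energy matrix (composite stability criterion of Section 5.2). Let n̂, n₁, n₂ be positive integers. Let Ĥ, Ĵ be positive diagonal n̂×n̂ real matrices, ĝ¹¹, ĝ¹², ĝ²² diagonal n̂×n̂ real matrices, H₁, J₁ positive diagonal n₁×n₁ real matrices, H₂, J₂ positive diagonal n₂×n₂ real matrices, and g¹¹₁ (n₁×n₁), g²²₂ (n₂×n₂) diagonal real matrices. Let P_{c1} ∈ ℝ^{n̂×n₁} and P_{c2} ∈ ℝ^{n̂×n₂} have trivial null spaces. Let α > 0 and β > 0 be real numbers such that: (i) H₁·J₁·g¹¹₁ − α·P_{c1}ᵀ·Ĥ·Ĵ·ĝ¹¹·P_{c1} is positive semidefinite; (ii) H₂·J₂·g²²₂ − β·P_{c2}ᵀ·Ĥ·Ĵ·ĝ²²·P_{c2} is positive semidefinite; and (iii) for every index i the 2×2 matrix [[α·Ĥᵢᵢ·Ĵᵢᵢ·ĝ¹¹ᵢᵢ, Ĥᵢᵢ·Ĵᵢᵢ·ĝ¹²ᵢᵢ], [Ĥᵢᵢ·Ĵᵢᵢ·ĝ¹²ᵢᵢ, β·Ĥᵢᵢ·Ĵᵢᵢ·ĝ²²ᵢᵢ]]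 is positive definite. Then the (n₁+n₂)×(n₁+n₂) block matrix with blocks [[H₁·J₁·g¹¹₁, P_{c1}ᵀ·Ĥ·Ĵ·ĝ¹²·P_{c2}], [P_{c2}ᵀ·Ĥ·Ĵ·ĝ¹²·P_{c1}, H₂·J₂·g²²₂]] is positive definite. -/

import Mathlib

open Matrix

lemma quad2_pos {p q r : ℝ} (h : (!![p,q;q,r] : Matrix (Fin 2) (Fin 2) ℝ).PosDef)
    (u v : ℝ) (huv : ¬(u = 0 ∧ v = 0)) :
    0 < p*u*u + q*u*v + (q*v*u + r*v*v) := by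
  have hw : (![u,v] : Fin 2 → ℝ) ≠ 0 := by
    intro h0
    apply huv
    constructor
    · simpa using congrFun h0 0
    · simpa using congrFun h0 1
  have := h.dotProduct_mulVec_pos hw
  simp [dotProduct, mulVec, Fin.sum_univ_two] at this
  linarith [this]

lemma quad2_nonneg {p q r : ℝ} (h : (!![p,q;q,r] : Matrix (Fin 2) (Fin 2) ℝ).PosDef)
    (u v : ℝ) : 0 ≤ p*u*u + q*u*v + (q*v*u + r*v*v) := by
  rcases Classical.em (u = 0 ∧ v = 0) with ⟨hu, hv⟩ | h'
  · simp [hu, hv]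
  · exact le_of_lt (quad2_pos h u v h')

theorem stmt8
    (nh n1 n2 : ℕ) (hnh : 0 < nh) (hn1 : 0 < n1) (hn2 : 0 < n2)
    (Hh Jh G11h G12h G22h : Matrix (Fin nh) (Fin nh) ℝ)
    (dHh dJh g11 g12 g22 : Fin nh → ℝ)
    (hHh : Hh = diagonal dHh) (hdHh : ∀ i, 0 < dHh i)
    (hJh : Jh = diagonal dJh) (hdJh : ∀ i, 0 < dJh i)
    (hG11h : G11h = diagonal g11) (hG12h : G12h = diagonal g12) (hG22h : G22h = diagonal g22)
    (H1 J1 G11 : Matrix (Fin n1) (Fin n1) ℝ) (dH1 dJ1 dG11 : Fin n1 → ℝ)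
    (hH1 : H1 = diagonal dH1) (hdH1 : ∀ i, 0 < dH1 i)
    (hJ1 : J1 = diagonal dJ1) (hdJ1 : ∀ i, 0 < dJ1 i)
    (hG11 : G11 = diagonal dG11)
    (H2 J2 G22 : Matrix (Fin n2) (Fin n2) ℝ) (dH2 dJ2 dG22 : Fin n2 → ℝ)
    (hH2 : H2 = diagonal dH2) (hdH2 : ∀ i, 0 < dH2 i)
    (hJ2 : J2 = diagonal dJ2) (hdJ2 : ∀ i, 0 < dJ2 i)
    (hG22 : G22 = diagonal dG22)
    (Pc1 : Matrix (Fin nh) (Fin n1) ℝ) (Pc2 : Matrix (Fin nh) (Fin n2) ℝ)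
    (hPc1 : ∀ x, Pc1 *ᵥ x = 0 → x = 0) (hPc2 : ∀ y, Pc2 *ᵥ y = 0 → y = 0)
    (α β : ℝ) (hα : 0 < α) (hβ : 0 < β)
    (h1 : (H1 * J1 * G11 - α • (Pc1ᵀ * (Hh * Jh * G11h) * Pc1)).PosSemidef)
    (h2 : (H2 * J2 * G22 - β • (Pc2ᵀ * (Hh * Jh * G22h) * Pc2)).PosSemidef)
    (h3 : ∀ i, (!![α * (dHh i * dJh i * g11 i), dHh i * dJh i * g12 i;
                   dHh i * dJh i * g12 i, β * (dHh i * dJh i * g22 i)] :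
        Matrix (Fin 2) (Fin 2) ℝ).PosDef) :
    (fromBlocks
      (H1 * J1 * G11) (Pc1ᵀ * (Hh * Jh * G12h) * Pc2)
      (Pc2ᵀ * (Hh * Jh * G12h) * Pc1) (H2 * J2 * G22)).PosDef := by
  -- abbreviations
  set A := H1 * J1 * G11 with hA
  set Dm := H2 * J2 * G22 with hDm
  set D11 := Hh * Jh * G11h with hD11
  set D12 := Hh * Jh * G12h with hD12
  set D22 := Hh * Jh * G22h with hD22
  have hD12d : D12 = diagonal (fun i => dHh i * dJh i * g12 i) := by
    rw [hD12, hHh, hJh, hG12h, diagonal_mul_diagonal, diagonal_mul_diagonal]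
  have hD12t : D12ᵀ = D12 := by rw [hD12d, diagonal_transpose]
  have hAt : Aᵀ = A := by
    simp [hA, hH1, hJ1, hG11, diagonal_mul_diagonal]
  have hDmt : Dmᵀ = Dm := by
    simp [hDm, hH2, hJ2, hG22, diagonal_mul_diagonal]
  have hBC : (Pc2ᵀ * D12 * Pc1)ᵀ = Pc1ᵀ * D12 * Pc2 := by
    rw [transpose_mul, transpose_mul, transpose_transpose, hD12t]
    exact (Matrix.mul_assoc Pc1ᵀ D12 Pc2).symm
  have hCB : (Pc1ᵀ * D12 * Pc2)ᵀ = Pc2ᵀ * D12 * Pc1 := by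
    rw [transpose_mul, transpose_mul, transpose_transpose, hD12t]
    exact (Matrix.mul_assoc Pc2ᵀ D12 Pc1).symm
  refine Matrix.PosDef.of_dotProduct_mulVec_pos ?_ ?_
  · -- Hermitian
    show _ᴴ = _
    rw [conjTranspose_eq_transpose_of_trivial, fromBlocks_transpose, hAt, hDmt, hBC, hCB]
  · intro z hz
    rw [star_trivial]
    set x := z ∘ Sum.inl with hxdef
    set y := z ∘ Sum.inr with hydef
    set u := Pc1 *ᵥ x with hu
    set v := Pc2 *ᵥ y with hv
    -- cross terms
    have cross1 : x ⬝ᵥ ((Pc1ᵀ * D12 * Pc2) *ᵥ y) = u ⬝ᵥ (D12 *ᵥ v) := by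
      rw [Matrix.mul_assoc, ← mulVec_mulVec, dotProduct_mulVec, vecMul_transpose, mulVec_mulVec]
    have cross2 : y ⬝ᵥ ((Pc2ᵀ * D12 * Pc1) *ᵥ x) = v ⬝ᵥ (D12 *ᵥ u) := by
      rw [Matrix.mul_assoc, ← mulVec_mulVec, dotProduct_mulVec, vecMul_transpose, mulVec_mulVec]
    have diag1 : x ⬝ᵥ (A *ᵥ x) =
        x ⬝ᵥ ((A - α • (Pc1ᵀ * D11 * Pc1)) *ᵥ x) + α * (u ⬝ᵥ (D11 *ᵥ u)) := by
      have : x ⬝ᵥ ((Pc1ᵀ * D11 * Pc1) *ᵥ x) = u ⬝ᵥ (D11 *ᵥ u) := by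
        rw [Matrix.mul_assoc, ← mulVec_mulVec, dotProduct_mulVec, vecMul_transpose, mulVec_mulVec]
      rw [sub_mulVec, dotProduct_sub, smul_mulVec, dotProduct_smul, this]
      simp [smul_eq_mul]
    have diag2 : y ⬝ᵥ (Dm *ᵥ y) =
        y ⬝ᵥ ((Dm - β • (Pc2ᵀ * D22 * Pc2)) *ᵥ y) + β * (v ⬝ᵥ (D22 *ᵥ v)) := by
      have : y ⬝ᵥ ((Pc2ᵀ * D22 * Pc2) *ᵥ y) = v ⬝ᵥ (D22 *ᵥ v) := by
        rw [Matrix.mul_assoc, ← mulVec_mulVec, dotProduct_mulVec, vecMul_transpose, mulVec_mulVec]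
      rw [sub_mulVec, dotProduct_sub, smul_mulVec, dotProduct_smul, this]
      simp [smul_eq_mul]
    have hQ : z ⬝ᵥ ((fromBlocks A (Pc1ᵀ * D12 * Pc2) (Pc2ᵀ * D12 * Pc1) Dm) *ᵥ z) =
        x ⬝ᵥ ((A - α • (Pc1ᵀ * D11 * Pc1)) *ᵥ x)
        + y ⬝ᵥ ((Dm - β • (Pc2ᵀ * D22 * Pc2)) *ᵥ y)
        + (α * (u ⬝ᵥ (D11 *ᵥ u)) + u ⬝ᵥ (D12 *ᵥ v)
           + (v ⬝ᵥ (D12 *ᵥ u) + β * (v ⬝ᵥ (D22 *ᵥ v)))) := by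
      rw [fromBlocks_mulVec, dotProduct_block]
      simp only [Sum.elim_comp_inl, Sum.elim_comp_inr, dotProduct_add]
      rw [← hxdef, ← hydef, cross1, cross2, diag1, diag2]
      ring
    rw [hQ]
    have hnn1 : 0 ≤ x ⬝ᵥ ((A - α • (Pc1ᵀ * D11 * Pc1)) *ᵥ x) := by
      have := h1.dotProduct_mulVec_nonneg x; rwa [star_trivial] at this
    have hnn2 : 0 ≤ y ⬝ᵥ ((Dm - β • (Pc2ᵀ * D22 * Pc2)) *ᵥ y) := by
      have := h2.dotProduct_mulVec_nonneg y; rwa [star_trivial] at this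
    -- the remaining part is a sum of 2x2 quadratic forms
    have hD11d : D11 = diagonal (fun i => dHh i * dJh i * g11 i) := by
      rw [hD11, hHh, hJh, hG11h, diagonal_mul_diagonal, diagonal_mul_diagonal]
    have hD22d : D22 = diagonal (fun i => dHh i * dJh i * g22 i) := by
      rw [hD22, hHh, hJh, hG22h, diagonal_mul_diagonal, diagonal_mul_diagonal]
    have hsum : α * (u ⬝ᵥ (D11 *ᵥ u)) + u ⬝ᵥ (D12 *ᵥ v)
           + (v ⬝ᵥ (D12 *ᵥ u) + β * (v ⬝ᵥ (D22 *ᵥ v)))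
        = ∑ i, ((α * (dHh i * dJh i * g11 i)) * u i * u i
            + (dHh i * dJh i * g12 i) * u i * v i
            + ((dHh i * dJh i * g12 i) * v i * u i
            + (β * (dHh i * dJh i * g22 i)) * v i * v i)) := by
      rw [hD11d, hD22d, hD12d]
      simp only [dotProduct, mulVec_diagonal, Finset.mul_sum, ← Finset.sum_add_distrib]
      refine Finset.sum_congr rfl fun i _ => by ring
    rw [hsum]
    -- strict positivity of the sum
    have hne : ∃ i, ¬(u i = 0 ∧ v i = 0) := by
      by_contra hcon
      push_neg at hcon
      have hx0 : x = 0 := hPc1 x (by ext i; exact (hcon i).1)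
      have hy0 : y = 0 := hPc2 y (by ext i; exact (hcon i).2)
      apply hz
      ext j
      cases j with
      | inl a => exact congrFun hx0 a
      | inr b => exact congrFun hy0 b
    obtain ⟨i0, hi0⟩ := hne
    have hpos : 0 < ∑ i, ((α * (dHh i * dJh i * g11 i)) * u i * u i
            + (dHh i * dJh i * g12 i) * u i * v i
            + ((dHh i * dJh i * g12 i) * v i * u i
            + (β * (dHh i * dJh i * g22 i)) * v i * v i)) := by
      apply Finset.sum_pos' (fun i _ => quad2_nonneg (h3 i) (u i) (v i))
      exact ⟨i0, Finset.mem_univ i0, quad2_pos (h3 i0) (u i0) (v i0) hi0⟩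
    linarith
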